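/- The dual lattice of L_W = {[[a, −b/N],[c, −a]] : a,b,c ∈ ℤ} with respect to the bilinear form (x,y) = N·tr(x·adj(y)) on the space of trace-zero 2×2 rational matrices equals L_W' = {[[a/(2N), −b/N],[c, −a/(2N)]] : a,b,c ∈ ℤ}. -/

import Mathlib

open Matrix

/-- The lattice `L_W = {[[a, −b/N],[c, −a]] : a,b,c ∈ ℤ}`. -/
def latLW (N : ℕ) : Set (Matrix (Fin 2) (Fin 2) ℚ) :=
  {x | ∃ a b c : ℤ, x = !![(a : ℚ), -(b : ℚ)/(N : ℚ); (c : ℚ), -(a : ℚ)]}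

/-- The lattice `L_W' = {[[a/2N, −b/N],[c, −a/2N]] : a,b,c ∈ ℤ}`. -/
def latLW' (N : ℕ) : Set (Matrix (Fin 2) (Fin 2) ℚ) :=
  {x | ∃ a b c : ℤ,
    x = !![(a : ℚ)/(2*N : ℚ), -(b : ℚ)/(N : ℚ); (c : ℚ), -(a : ℚ)/(2*N : ℚ)]}

lemma pairing_eval (N : ℕ) (hN : 0 < N) (x : Matrix (Fin 2) (Fin 2) ℚ) (a b c : ℤ) :
    (N : ℚ) * (x * (!![(a : ℚ), -(b : ℚ)/(N : ℚ); (c : ℚ), -(a : ℚ)]).adjugate).trace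
      = (a : ℚ) * N * (x 1 1 - x 0 0) - (c : ℚ) * N * (x 0 1) + (b : ℚ) * (x 1 0) := by
  have hN' : (N : ℚ) ≠ 0 := by exact_mod_cast hN.ne'
  rw [Matrix.adjugate_fin_two, Matrix.trace_fin_two]
  simp only [Matrix.mul_apply, Fin.sum_univ_two, Matrix.cons_val', Matrix.cons_val_zero,
    Matrix.cons_val_one, Matrix.head_cons, Matrix.head_fin_const, Matrix.empty_val',
    Matrix.cons_val_fin_one, Matrix.of_apply]
  field_simp
  ring

/-- The dual lattice of `L_W` inside the trace-zero 2×2 rational matrices,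
with respect to the bilinear form `(x,y) = N·tr(x·adj(y))`, equals `L_W'`. -/
theorem stmt4 (N : ℕ) (hN : 0 < N) :
    {x : Matrix (Fin 2) (Fin 2) ℚ | x.trace = 0 ∧
      ∀ y ∈ latLW N, ∃ m : ℤ, (N : ℚ) * (x * y.adjugate).trace = m} = latLW' N := by
  have hN' : (N : ℚ) ≠ 0 := by exact_mod_cast hN.ne'
  ext x
  constructor
  · rintro ⟨htr, h⟩
    rw [Matrix.trace_fin_two] at htr
    obtain ⟨m1, hm1⟩ := h !![((1:ℤ) : ℚ), -((0:ℤ) : ℚ)/(N : ℚ); ((0:ℤ) : ℚ), -((1:ℤ) : ℚ)]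
      ⟨1, 0, 0, rfl⟩
    obtain ⟨m2, hm2⟩ := h !![((0:ℤ) : ℚ), -((1:ℤ) : ℚ)/(N : ℚ); ((0:ℤ) : ℚ), -((0:ℤ) : ℚ)]
      ⟨0, 1, 0, rfl⟩
    obtain ⟨m3, hm3⟩ := h !![((0:ℤ) : ℚ), -((0:ℤ) : ℚ)/(N : ℚ); ((1:ℤ) : ℚ), -((0:ℤ) : ℚ)]
      ⟨0, 0, 1, rfl⟩
    rw [pairing_eval N hN x 1 0 0] at hm1
    rw [pairing_eval N hN x 0 1 0] at hm2
    rw [pairing_eval N hN x 0 0 1] at hm3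
    push_cast at hm1 hm2 hm3
    refine ⟨-m1, m3, m2, ?_⟩
    have h11 : x 1 1 = -x 0 0 := by linarith
    rw [h11] at hm1
    have e00 : x 0 0 = ((-m1 : ℤ) : ℚ) / (2 * N) := by
      push_cast
      field_simp
      linarith [hm1]
    have e01 : x 0 1 = -(m3 : ℚ) / N := by
      field_simp
      linarith [hm3]
    have e10 : x 1 0 = ((m2 : ℤ) : ℚ) := by push_cast; linarith [hm2]
    have e11 : x 1 1 = -(((-m1 : ℤ) : ℚ) / (2 * N)) := by rw [h11, e00]
    rw [Matrix.eta_fin_two x, e00, e01, e10, e11]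
    simp [neg_div]
  · rintro ⟨a, b, c, rfl⟩
    refine ⟨by rw [Matrix.trace_fin_two]; simp; ring, ?_⟩
    rintro y ⟨a', b', c', rfl⟩
    refine ⟨-a' * a + c' * b + b' * c, ?_⟩
    rw [pairing_eval N hN _ a' b' c']
    simp
    push_cast
    field_simp
    ring
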